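/- Let Σ be a real symmetric positive definite n×n matrix and let d ∈ ℝⁿ be nonzero. Then for every nonzero A ∈ ℝⁿ and every α ∈ [0,1], α(1−α)(Aᵀd)² / (2 AᵀΣA) ≤ (1/8) dᵀΣ⁻¹d, and equality is attained at α = 1/2 and A = Σ⁻¹d. Hence the maximum Chernoff information achievable by a time-invariant linear mixing of jointly Gaussian variables with common covariance Σ and mean difference d equals (1/8) dᵀΣ⁻¹d, attained by the mixing vector A = Σ⁻¹d. -/

import Mathlib

open Matrix

lemma sym_swap {n : ℕ} {S : Matrix (Fin n) (Fin n) ℝ} (hs : S.IsSymm)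
    (u v : Fin n → ℝ) : u ⬝ᵥ S *ᵥ v = v ⬝ᵥ S *ᵥ u := by
  rw [dotProduct_mulVec, ← mulVec_transpose, hs.eq, dotProduct_comm]

theorem stmt8 {n : ℕ} (S : Matrix (Fin n) (Fin n) ℝ) (hsymm : S.IsSymm) (hS : S.PosDef)
    (d : Fin n → ℝ) (hd : d ≠ 0) :
    (∀ A : Fin n → ℝ, A ≠ 0 → ∀ α ∈ Set.Icc (0 : ℝ) 1,
        α * (1 - α) * (A ⬝ᵥ d) ^ 2 / (2 * (A ⬝ᵥ S *ᵥ A)) ≤ (1 / 8) * (d ⬝ᵥ S⁻¹ *ᵥ d))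
    ∧ ((1 / 2 : ℝ) * (1 - (1 / 2 : ℝ)) * ((S⁻¹ *ᵥ d) ⬝ᵥ d) ^ 2
          / (2 * ((S⁻¹ *ᵥ d) ⬝ᵥ S *ᵥ (S⁻¹ *ᵥ d)))
        = (1 / 8) * (d ⬝ᵥ S⁻¹ *ᵥ d)) := by
  have hdet : IsUnit S.det := isUnit_iff_ne_zero.mpr hS.det_pos.ne'
  have hinv : (S⁻¹).PosDef := hS.inv
  have hinvsymm : (S⁻¹).IsSymm := by
    have := hinv.isHermitian
    simpa [Matrix.IsHermitian, Matrix.IsSymm] using this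
  have hSd : S *ᵥ (S⁻¹ *ᵥ d) = d := by
    rw [mulVec_mulVec, Matrix.mul_nonsing_inv S hdet, one_mulVec]
  have hc : 0 < d ⬝ᵥ S⁻¹ *ᵥ d := by
    have := hinv.dotProduct_mulVec_pos hd
    simpa using this
  set c : ℝ := d ⬝ᵥ S⁻¹ *ᵥ d with hcdef
  -- x = S⁻¹ d
  set x : Fin n → ℝ := S⁻¹ *ᵥ d with hxdef
  have hxd : x ⬝ᵥ d = c := dotProduct_comm _ _
  have hxSx : x ⬝ᵥ S *ᵥ x = c := by rw [hSd]; exact hxd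
  constructor
  · intro A hA α hα
    have hq : 0 < A ⬝ᵥ S *ᵥ A := by
      have := hS.dotProduct_mulVec_pos hA
      simpa using this
    set q : ℝ := A ⬝ᵥ S *ᵥ A
    set p : ℝ := A ⬝ᵥ d with hpdef
    -- Cauchy–Schwarz : p^2 ≤ q * c
    have hcs : p ^ 2 ≤ q * c := by
      have key : ∀ t : ℝ, 0 ≤ c * (t * t) + (2 * p) * t + q := by
        intro t
        have hnn := hS.posSemidef.dotProduct_mulVec_nonneg (t • x + A)
        have hexp : (t • x + A) ⬝ᵥ S *ᵥ (t • x + A)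
            = c * (t * t) + (2 * p) * t + q := by
          have h1 : A ⬝ᵥ S *ᵥ x = p := by
            rw [hxdef, hSd, hpdef]
          have h2 : x ⬝ᵥ S *ᵥ A = p := by
            rw [sym_swap hsymm, h1]
          simp [Matrix.mulVec_add, Matrix.mulVec_smul, dotProduct_add,
            add_dotProduct, smul_dotProduct, dotProduct_smul, hxSx, h1, h2]
          ring
        simp only [star_trivial] at hnn
        rw [hexp] at hnn
        simpa using hnn
      have hdisc := discrim_le_zero key
      rw [discrim] at hdisc
      nlinarith
    have hαα : α * (1 - α) ≤ 1 / 4 := by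
      nlinarith [sq_nonneg (α - 1/2)]
    have hα0 : 0 ≤ α * (1 - α) :=
      mul_nonneg hα.1 (by linarith [hα.2])
    rw [div_le_iff₀ (by positivity)]
    nlinarith [sq_nonneg p, mul_nonneg hα0 (sq_nonneg p)]
  · have h1 : (S⁻¹ *ᵥ d) ⬝ᵥ d = c := hxd
    have h2 : (S⁻¹ *ᵥ d) ⬝ᵥ S *ᵥ (S⁻¹ *ᵥ d) = c := hxSx
    rw [h1, h2]
    field_simp
    ring
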